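/- Under critical bond percolation on ℤ², assume: (i) the expected number L(m,n) of m/10-boxes in a tiling of B(n/2) intersected by the lowest crossing of B(n) satisfies E[L(m,n)] ≤ C (n/m)² π₃(m,n); (ii) with probability at least c > 0, there is an open crossing of B(n/2) which is part of the lowest crossing of B(n); (iii) (Aizenman–Burchard) uniformly over large n and ℓ ≥ 1/n, with probability at least 1−ε every open crossing path of the rescaled box of diameter ≥ 1/10 requires at least C(ε) ℓ^{−1−C₄} sets of diameter ℓ to cover, for some C₄ > 0. Then there is C₃ > 0 such that π₃(m,n) ≥ C₃ (n/m)^{C₄ − 1} for all 1 ≤ m ≤ n. -/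

import Mathlib

open MeasureTheory

theorem stmt8 {Ω : Type*} [MeasurableSpace Ω] (μ : Measure Ω) [IsProbabilityMeasure μ]
    (π₃2 : ℕ → ℕ → ℝ) (hπpos : ∀ m n, 0 < π₃2 m n)
    (L N : ℕ → ℕ → Ω → ℝ)
    (hLnn : ∀ m n ω, 0 ≤ L m n ω)
    (hLint : ∀ m n, Integrable (L m n) μ)
    (C C₄ : ℝ) (hC : 0 < C) (hC₄ : 0 < C₄)
    -- (i) first moment bound
    (hfirst : ∀ m n : ℕ, 1 ≤ m → m ≤ n →
      ∫ ω, L m n ω ∂μ ≤ C * ((n : ℝ) / m) ^ 2 * π₃2 m n)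
    (c : ℝ) (hc : 0 < c)
    (G : ℕ → ℕ → Set Ω)
    -- (ii) on an event of probability at least c, the box count dominates the covering number
    (hG : ∀ m n : ℕ, 1 ≤ m → m ≤ n → ENNReal.ofReal c ≤ μ (G m n))
    (hGN : ∀ m n : ℕ, 1 ≤ m → m ≤ n → ∀ ω ∈ G m n, N m n ω ≤ L m n ω)
    -- (iii) Aizenman–Burchard covering lower bound
    (hcover : ∀ ε : ℝ, 0 < ε → ∃ Cε > 0, ∀ m n : ℕ, 1 ≤ m → m ≤ n →
      μ {ω | N m n ω < Cε * ((n : ℝ) / m) ^ (1 + C₄)} ≤ ENNReal.ofReal ε) :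
    ∃ C₃ > 0, ∀ m n : ℕ, 1 ≤ m → m ≤ n →
      C₃ * ((n : ℝ) / m) ^ (C₄ - 1) ≤ π₃2 m n := by
  obtain ⟨Cε, hCε, hcov⟩ := hcover (c / 2) (by linarith)
  refine ⟨c / 2 * Cε / C, by positivity, fun m n hm hmn => ?_⟩
  set x : ℝ := (n : ℝ) / m with hxdef
  have hm0 : (0 : ℝ) < m := by exact_mod_cast hm
  have hx1 : (1 : ℝ) ≤ x := by
    rw [hxdef, le_div_iff₀ hm0]
    simpa using (by exact_mod_cast hmn : (m : ℝ) ≤ n)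
  have hx0 : (0 : ℝ) < x := lt_of_lt_of_le one_pos hx1
  set K : ℝ := Cε * x ^ (1 + C₄) with hKdef
  have hK0 : 0 < K := by positivity
  -- the good set where L ≥ K
  set A : Set Ω := G m n \ {ω | N m n ω < K} with hAdef
  have hAsub : A ⊆ {ω | K ≤ L m n ω} := by
    intro ω hω
    have h1 : K ≤ N m n ω := not_lt.mp hω.2
    exact h1.trans (hGN m n hm hmn ω hω.1)
  -- lower bound on μ A
  have hμA : ENNReal.ofReal (c / 2) ≤ μ A := by
    have hsplit : μ (G m n) ≤ μ A + μ {ω | N m n ω < K} := by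
      refine (measure_mono ?_).trans (measure_union_le _ _)
      intro ω hω
      by_cases h : ω ∈ {ω | N m n ω < K}
      · exact Or.inr h
      · exact Or.inl ⟨hω, h⟩
    have h1 : ENNReal.ofReal c ≤ μ A + ENNReal.ofReal (c / 2) :=
      (hG m n hm hmn).trans (hsplit.trans (add_le_add le_rfl (hcov m n hm hmn)))
    have h2 : ENNReal.ofReal c = ENNReal.ofReal (c / 2) + ENNReal.ofReal (c / 2) := by
      rw [← ENNReal.ofReal_add (by linarith) (by linarith)]; ring_nf
    rw [h2] at h1
    exact ENNReal.le_of_add_le_add_right ENNReal.ofReal_ne_top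
      (by rwa [add_comm (μ A)] at h1)
  -- Markov
  have hmarkov : K * (μ {ω | K ≤ L m n ω}).toReal ≤ ∫ ω, L m n ω ∂μ :=
    mul_meas_ge_le_integral_of_nonneg (Filter.Eventually.of_forall (hLnn m n))
      (hLint m n) K
  have hμset : c / 2 ≤ (μ {ω | K ≤ L m n ω}).toReal := by
    have h1 : ENNReal.ofReal (c / 2) ≤ μ {ω | K ≤ L m n ω} :=
      hμA.trans (measure_mono hAsub)
    have h2 := ENNReal.toReal_mono (measure_ne_top μ _) h1
    rwa [ENNReal.toReal_ofReal (by linarith)] at h2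
  have hmain : K * (c / 2) ≤ C * x ^ 2 * π₃2 m n := by
    calc K * (c / 2) ≤ K * (μ {ω | K ≤ L m n ω}).toReal :=
          mul_le_mul_of_nonneg_left hμset hK0.le
      _ ≤ ∫ ω, L m n ω ∂μ := hmarkov
      _ ≤ C * x ^ 2 * π₃2 m n := hfirst m n hm hmn
  -- rpow arithmetic: x^(1+C₄) = x^2 * x^(C₄-1)
  have hxpow : x ^ (1 + C₄) = x ^ 2 * x ^ (C₄ - 1) := by
    rw [← Real.rpow_two, ← Real.rpow_add hx0]
    ring_nf
  rw [hKdef, hxpow] at hmain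
  rw [div_mul_eq_mul_div, div_le_iff₀ hC]
  nlinarith [hmain, pow_pos hx0 2, Real.rpow_nonneg hx0.le (C₄ - 1), hπpos m n]
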